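/- Let R be a finite local ring of odd characteristic with maximal ideal M, and let β be the bilinear form on R² defined by β((x₁,x₂),(y₁,y₂)) = x₁y₁ − x₂y₂. Then the largest possible cardinality of a unimodular orthogonal set in R² with respect to β is |R| − |M|. -/

import Mathlib

section Aux

variable {R : Type*} [CommRing R] [IsLocalRing R]

private lemma aux_unit_or_unit {x y : R} (h : Ideal.span {x, y} = ⊤) :
    IsUnit x ∨ IsUnit y := by
  by_contra hc
  push_neg at hc
  have h1 : (1 : R) ∈ Ideal.span ({x, y} : Set R) := h ▸ Submodule.mem_top
  rw [Ideal.mem_span_pair] at h1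
  obtain ⟨a, b, hab⟩ := h1
  have : a * x + b * y ∈ nonunits R := by
    apply IsLocalRing.nonunits_add
    · exact fun hu => hc.1 (isUnit_of_mul_isUnit_right hu)
    · exact fun hu => hc.2 (isUnit_of_mul_isUnit_right hu)
  rw [hab] at this
  exact this isUnit_one

private lemma aux_unit_sub {u v : R} (hu : IsUnit u) (hv : ¬ IsUnit v) :
    IsUnit (u - v) := by
  by_contra hd
  have := IsLocalRing.nonunits_add (mem_nonunits_iff.mpr hd) (mem_nonunits_iff.mpr hv)
  rw [sub_add_cancel] at this
  exact this hu

private lemma aux_unit_add {u v : R} (hu : IsUnit u) (hv : ¬ IsUnit v) :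
    IsUnit (u + v) := by
  have : ¬ IsUnit (-v) := fun h => hv (by simpa using h.neg)
  simpa [sub_neg_eq_add] using aux_unit_sub hu this

private lemma aux_two_unit' (h : Odd (ringChar R)) : IsUnit (2 : R) := by
  obtain ⟨m, hm⟩ := h
  refine IsUnit.of_mul_eq_one (a := (2 : R)) ((m : R) + 1) ?_
  have h0 : ((ringChar R : ℕ) : R) = 0 := (ringChar.spec R _).mpr dvd_rfl
  rw [hm] at h0
  push_cast at h0 ⊢
  linear_combination h0

private lemma aux_card_units [Fintype R] :
    Nat.card Rˣ = Fintype.card R - Nat.card (IsLocalRing.maximalIdeal R) := by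
  classical
  have eU : Nat.card Rˣ = Fintype.card {x : R // IsUnit x} := by
    rw [Nat.card_congr
      (⟨fun u => ⟨u, u.isUnit⟩, fun x => x.2.unit,
        fun u => Units.ext (by simp),
        fun x => Subtype.ext (by simp)⟩ : Rˣ ≃ {x : R // IsUnit x})]
    exact Nat.card_eq_fintype_card
  have eM : Nat.card (IsLocalRing.maximalIdeal R) = Fintype.card {x : R // ¬ IsUnit x} := by
    rw [Nat.card_congr (Equiv.subtypeEquivRight
      (q := fun x : R => ¬ IsUnit x)
      (fun x => by simp [IsLocalRing.mem_maximalIdeal, mem_nonunits_iff]))]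
    exact Nat.card_eq_fintype_card
  have hcompl : Fintype.card {x : R // ¬ IsUnit x}
      = Fintype.card R - Fintype.card {x : R // IsUnit x} :=
    Fintype.card_subtype_compl _
  have hle : Fintype.card {x : R // IsUnit x} ≤ Fintype.card R := Fintype.card_subtype_le _
  omega

end Aux

/-- For a finite local ring `R` of odd characteristic with maximal ideal `M`
and the bilinear form `β((x₁,x₂),(y₁,y₂)) = x₁y₁ - x₂y₂` on `R²`, the largest possible
cardinality of a unimodular orthogonal set is `|R| - |M|`. -/
theorem stmt_2 (R : Type*) [CommRing R] [IsLocalRing R] [Fintype R]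
    (hchar : Odd (ringChar R)) :
    IsGreatest {k : ℕ | ∃ S : Finset (R × R),
        (∀ v ∈ S, Ideal.span {v.1, v.2} = ⊤) ∧
        (∀ x ∈ S, ∀ y ∈ S, x ≠ y → x.1 * y.1 - x.2 * y.2 = 0) ∧
        S.card = k}
      (Fintype.card R - Nat.card (IsLocalRing.maximalIdeal R)) := by
  classical
  have h2 : IsUnit (2 : R) := aux_two_unit' hchar
  constructor
  · -- membership : the set {(u,u) : u unit}
    refine ⟨Finset.univ.image (fun u : Rˣ => ((u : R), (u : R))), ?_, ?_, ?_⟩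
    · intro v hv
      simp only [Finset.mem_image, Finset.mem_univ, true_and] at hv
      obtain ⟨u, rfl⟩ := hv
      exact Ideal.eq_top_of_isUnit_mem _
        (Ideal.subset_span (Set.mem_insert _ _)) u.isUnit
    · intro x hx y hy _
      simp only [Finset.mem_image, Finset.mem_univ, true_and] at hx hy
      obtain ⟨u, rfl⟩ := hx
      obtain ⟨w, rfl⟩ := hy
      ring
    · rw [Finset.card_image_of_injective _
        (fun u v h => Units.ext (congrArg Prod.fst h)), Finset.card_univ,
        ← Nat.card_eq_fintype_card]
      exact aux_card_units
  · -- upper bound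
    rintro k ⟨S, hS1, hS2, rfl⟩
    rw [← aux_card_units]
    by_cases hbig : 3 ≤ S.card
    · -- pick three distinct elements a b c
      obtain ⟨a, ha⟩ : S.Nonempty := Finset.card_pos.mp (by omega)
      obtain ⟨b, hb'⟩ : (S.erase a).Nonempty := by
        rw [← Finset.card_pos, Finset.card_erase_of_mem ha]; omega
      obtain ⟨c, hc'⟩ : ((S.erase a).erase b).Nonempty := by
        rw [← Finset.card_pos, Finset.card_erase_of_mem hb',
          Finset.card_erase_of_mem ha]; omega
      have hba : b ≠ a := Finset.ne_of_mem_erase hb'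
      have hb : b ∈ S := Finset.mem_of_mem_erase hb'
      have hcb : c ≠ b := Finset.ne_of_mem_erase hc'
      have hca : c ≠ a := Finset.ne_of_mem_erase (Finset.mem_of_mem_erase hc')
      have hc : c ∈ S := Finset.mem_of_mem_erase (Finset.mem_of_mem_erase hc')
      -- Step 1: every element has nonunit quadratic value
      have key : ∀ x ∈ S, ¬ IsUnit (x.1 * x.1 - x.2 * x.2) := by
        intro x hx hQ
        obtain ⟨y, z, hy, hz, hxy, hxz, hyz⟩ :
            ∃ y z, y ∈ S ∧ z ∈ S ∧ x ≠ y ∧ x ≠ z ∧ y ≠ z := by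
          rcases eq_or_ne x a with rfl | hxa
          · exact ⟨b, c, hb, hc, hba.symm, hca.symm, hcb.symm⟩
          rcases eq_or_ne x b with rfl | hxb
          · exact ⟨a, c, ha, hc, hba, hcb.symm, hca.symm⟩
          · exact ⟨a, b, ha, hb, hxa, hxb, hba.symm⟩
        have e1 := hS2 x hx y hy hxy
        have e2 := hS2 x hx z hz hxz
        have e3 := hS2 y hy z hz hyz
        have f1' : (x.1 * x.1 - x.2 * x.2) * (y.1 * z.1) = 0 := by
          linear_combination (x.1 * z.1) * e1 + (x.2 * y.2) * e2 - (x.2 * x.2) * e3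
        have f2' : (x.1 * x.1 - x.2 * x.2) * (y.2 * z.2) = 0 := by
          linear_combination (x.1 * z.1) * e1 + (x.2 * y.2) * e2 - (x.1 * x.1) * e3
        have f1 : y.1 * z.1 = 0 := hQ.mul_right_eq_zero.mp f1'
        have f2 : y.2 * z.2 = 0 := hQ.mul_right_eq_zero.mp f2'
        have hxuu := aux_unit_or_unit (hS1 x hx)
        rcases aux_unit_or_unit (hS1 y hy) with hy1 | hy2
        · have hz1 : z.1 = 0 := hy1.mul_right_eq_zero.mp f1
          have hz2 : IsUnit z.2 := (aux_unit_or_unit (hS1 z hz)).resolve_left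
            (by rw [hz1]; exact not_isUnit_zero)
          have hy2 : y.2 = 0 := by
            rw [mul_comm] at f2
            exact hz2.mul_right_eq_zero.mp f2
          have g1 : (y.1 * y.1 - y.2 * y.2) * (x.2 * z.2) = 0 := by
            linear_combination (y.1 * z.1) * e1 + (y.2 * x.2) * e3 - (y.1 * y.1) * e2
          have hQy : IsUnit (y.1 * y.1 - y.2 * y.2) := by
            rw [hy2]; simpa using hy1.mul hy1
          have hx2 : x.2 = 0 := by
            have h' := hQy.mul_right_eq_zero.mp g1
            rw [mul_comm] at h'
            exact hz2.mul_right_eq_zero.mp h'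
          have g2 : (z.1 * z.1 - z.2 * z.2) * (x.1 * y.1) = 0 := by
            linear_combination (z.1 * y.1) * e2 + (z.2 * x.2) * e3 - (z.2 * z.2) * e1
          have hQz : IsUnit (z.1 * z.1 - z.2 * z.2) := by
            rw [hz1]; simpa using (hz2.mul hz2).neg
          have hx1 : x.1 = 0 := by
            have h' := hQz.mul_right_eq_zero.mp g2
            rw [mul_comm] at h'
            exact hy1.mul_right_eq_zero.mp h'
          rcases hxuu with h | h
          · rw [hx1] at h; exact not_isUnit_zero h
          · rw [hx2] at h; exact not_isUnit_zero h
        · have hz2 : z.2 = 0 := hy2.mul_right_eq_zero.mp f2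
          have hz1 : IsUnit z.1 := (aux_unit_or_unit (hS1 z hz)).resolve_right
            (by rw [hz2]; exact not_isUnit_zero)
          have hy1 : y.1 = 0 := by
            rw [mul_comm] at f1
            exact hz1.mul_right_eq_zero.mp f1
          have g1 : (y.1 * y.1 - y.2 * y.2) * (x.1 * z.1) = 0 := by
            linear_combination (y.1 * z.1) * e1 + (y.2 * x.2) * e3 - (y.2 * y.2) * e2
          have hQy : IsUnit (y.1 * y.1 - y.2 * y.2) := by
            rw [hy1]; simpa using (hy2.mul hy2).neg
          have hx1 : x.1 = 0 := by
            have h' := hQy.mul_right_eq_zero.mp g1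
            rw [mul_comm] at h'
            exact hz1.mul_right_eq_zero.mp h'
          have g2 : (z.1 * z.1 - z.2 * z.2) * (x.2 * y.2) = 0 := by
            linear_combination (z.1 * y.1) * e2 + (z.2 * x.2) * e3 - (z.1 * z.1) * e1
          have hQz : IsUnit (z.1 * z.1 - z.2 * z.2) := by
            rw [hz2]; simpa using hz1.mul hz1
          have hx2 : x.2 = 0 := by
            have h' := hQz.mul_right_eq_zero.mp g2
            rw [mul_comm] at h'
            exact hy2.mul_right_eq_zero.mp h'
          rcases hxuu with h | h
          · rw [hx1] at h; exact not_isUnit_zero h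
          · rw [hx2] at h; exact not_isUnit_zero h
      -- Step 2: all coordinates are units
      have both : ∀ x ∈ S, IsUnit x.1 ∧ IsUnit x.2 := by
        intro x hx
        have hQ := key x hx
        have main : ∀ u v : R, IsUnit u → ¬ IsUnit (u * u - v * v) → IsUnit v := by
          intro u v hu hQ'
          by_contra hv
          exact hQ' (by
            have : u * u - v * v = (u - v) * (u + v) := by ring
            rw [this]
            exact (aux_unit_sub hu hv).mul (aux_unit_add hu hv))
        rcases aux_unit_or_unit (hS1 x hx) with h1 | h2
        · exact ⟨h1, main x.1 x.2 h1 hQ⟩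
        · refine ⟨main x.2 x.1 h2 ?_, h2⟩
          intro hu
          exact hQ (by simpa using hu.neg)
      -- Step 3: all elements are on a common line
      have L : ∀ p ∈ S, ∀ x ∈ S, ∀ y ∈ S, p ≠ x → p ≠ y →
          x.1 * y.2 = x.2 * y.1 := by
        intro p hp x hx y hy hpx hpy
        have e1 := hS2 p hp x hx hpx
        have e2 := hS2 p hp y hy hpy
        have hp1 := (both p hp).1
        have h0 : p.1 * (x.1 * y.2 - x.2 * y.1) = 0 := by
          linear_combination y.2 * e1 - x.2 * e2
        exact sub_eq_zero.mp (hp1.mul_right_eq_zero.mp h0)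
      have rel : ∀ x ∈ S, x.1 * a.2 = x.2 * a.1 := by
        intro x hx
        rcases eq_or_ne x a with rfl | hxa
        · ring
        rcases eq_or_ne x b with rfl | hxb
        · exact L c hc x hx a ha hcb hca
        · exact L b hb x hx a ha (Ne.symm hxb) hba
      have hinj : Set.InjOn (Prod.snd : R × R → R) ↑S := by
        intro x hx y hy hxy2
        have r1 := rel x (Finset.mem_coe.mp hx)
        have r2 := rel y (Finset.mem_coe.mp hy)
        have ha2 := (both a ha).2
        have heq : a.2 * x.1 = a.2 * y.1 := by
          rw [mul_comm a.2 x.1, mul_comm a.2 y.1, r1, r2, hxy2]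
        exact Prod.ext (ha2.mul_left_cancel heq) hxy2
      calc S.card = (S.image Prod.snd).card := (Finset.card_image_of_injOn hinj).symm
        _ ≤ (Finset.univ.filter (fun r : R => IsUnit r)).card := by
            apply Finset.card_le_card
            intro r hr
            simp only [Finset.mem_image] at hr
            obtain ⟨x, hx, rfl⟩ := hr
            simp only [Finset.mem_filter, Finset.mem_univ, true_and]
            exact (both x hx).2
        _ = Fintype.card {r : R // IsUnit r} := (Fintype.card_subtype _).symm
        _ = Nat.card Rˣ := by
            rw [← Nat.card_eq_fintype_card]
            exact (Nat.card_congr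
              (⟨fun u => ⟨u, u.isUnit⟩, fun x => x.2.unit,
                fun u => Units.ext (by simp),
                fun x => Subtype.ext (by simp)⟩ : Rˣ ≃ {x : R // IsUnit x})).symm
    · -- small case: card ≤ 2 ≤ card Rˣ
      have hne : (-1 : Rˣ) ≠ 1 := by
        intro h
        have h1 : (-1 : R) = 1 := by simpa using congrArg Units.val h
        have h20 : (2 : R) = 0 := by linear_combination -h1
        rw [h20] at h2
        exact not_isUnit_zero h2
      haveI : Nontrivial Rˣ := ⟨⟨-1, 1, hne⟩⟩
      have := Finite.one_lt_card (α := Rˣ)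
      omega
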